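/- Let A be a positive conjunctive TABG with states q1,…,qn, let r be a run of A, and let i, j be integers with 1 ≤ j < i ≤ height(r). Then there exists a pump-injection I : (H_i ∪ Ȟ_i ∪ H̊_i) → (H_j ∪ Ȟ_j ∪ H̊_j) if and only if ⟨r_{H_i}, r_{Ȟ_i}⟩ ≤ ⟨r_{H_j}, r_{Ȟ_j}⟩. -/

import Mathlib

set_option maxHeartbeats 1000000

namespace TreeAut

/-! ### Ranked terms -/

/-- Ranked terms over a symbol type `F` (arities are imposed by well-formedness). -/
inductive RTerm (F : Type) : Type
  | node : F → List (RTerm F) → RTerm F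

namespace RTerm

def rootLabel {F : Type} : RTerm F → F
  | .node f _ => f

/-- `SubAt t p s` : the subterm of `t` at position `p` is `s`. -/
inductive SubAt {F : Type} : RTerm F → List ℕ → RTerm F → Prop
  | refl (t : RTerm F) : SubAt t [] t
  | step {f : F} {ts : List (RTerm F)} {i : ℕ} {u s : RTerm F} {p : List ℕ} :
      ts[i]? = some u → SubAt u p s → SubAt (RTerm.node f ts) (i :: p) s

/-- `p` is a position of `t`. -/
def IsPos {F : Type} (t : RTerm F) (p : List ℕ) : Prop := ∃ s, SubAt t p s

/-- `ReplAt t p s t'` : `t'` is the result of replacing in `t` the subterm at `p` by `s`. -/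
inductive ReplAt {F : Type} : RTerm F → List ℕ → RTerm F → RTerm F → Prop
  | here (t s : RTerm F) : ReplAt t [] s s
  | step {f : F} {ts : List (RTerm F)} {i : ℕ} {u u' s : RTerm F} {p : List ℕ} :
      ts[i]? = some u → ReplAt u p s u' →
      ReplAt (RTerm.node f ts) (i :: p) s (RTerm.node f (ts.set i u'))

/-- Height of a term: the maximal length of a position. -/
def height {F : Type} : RTerm F → ℕ
  | .node _ [] => 0
  | .node f (t :: ts) => max (height t + 1) (height (RTerm.node f ts))

/-- Well-formedness of a term with respect to an arity function. -/
inductive WF {F : Type} (ar : F → ℕ) : RTerm F → Prop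
  | node {f : F} {ts : List (RTerm F)} :
      ts.length = ar f → (∀ u ∈ ts, WF ar u) → WF ar (RTerm.node f ts)

/-- A constant, i.e. a term reduced to a symbol (of arity 0). -/
def IsConst {F : Type} (t : RTerm F) : Prop := ∃ c : F, t = RTerm.node c []

/-- Relabeling of a term. -/
def map {F G : Type} (g : F → G) : RTerm F → RTerm G
  | .node f ts => RTerm.node (g f) (ts.attach.map (fun u => map g u.1))
decreasing_by
  simp only [RTerm.node.sizeOf_spec]
  have := List.sizeOf_lt_of_mem u.2
  omega

end RTerm

/-! ### Patterns (terms with variables) and flat equational theories -/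

/-- Terms with variables (variables are natural numbers). -/
inductive Pat (F : Type) : Type
  | var : ℕ → Pat F
  | node : F → List (Pat F) → Pat F

namespace Pat

def subst {F : Type} (σ : ℕ → RTerm F) : Pat F → RTerm F
  | .var v => σ v
  | .node f ps => RTerm.node f (ps.attach.map (fun p => subst σ p.1))
decreasing_by
  simp only [Pat.node.sizeOf_spec]
  have := List.sizeOf_lt_of_mem p.2
  omega

def height {F : Type} : Pat F → ℕ
  | .var _ => 0
  | .node _ [] => 0
  | .node f (p :: ps) => max (height p + 1) (height (Pat.node f ps))

inductive HasVar {F : Type} (v : ℕ) : Pat F → Prop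
  | var : HasVar v (Pat.var v)
  | node {f : F} {ps : List (Pat F)} {p : Pat F} :
      p ∈ ps → HasVar v p → HasVar v (Pat.node f ps)

inductive WF {F : Type} (ar : F → ℕ) : Pat F → Prop
  | var (v : ℕ) : WF ar (Pat.var v)
  | node {f : F} {ps : List (Pat F)} :
      ps.length = ar f → (∀ p ∈ ps, WF ar p) → WF ar (Pat.node f ps)

end Pat

/-- A flat equation: both sides well-formed, of the same height which is at most 1,
and with the same variables. -/
def IsFlatEq {F : Type} (ar : F → ℕ) (e : Pat F × Pat F) : Prop :=
  e.1.WF ar ∧ e.2.WF ar ∧ e.1.height = e.2.height ∧ e.1.height ≤ 1 ∧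
  (∀ v : ℕ, Pat.HasVar v e.1 ↔ Pat.HasVar v e.2)

/-- One rewrite step using an equation of `E` (in either direction) at some position. -/
def Rew {F : Type} (E : List (Pat F × Pat F)) (s t : RTerm F) : Prop :=
  ∃ l r : Pat F, ((l, r) ∈ E ∨ (r, l) ∈ E) ∧
    ∃ (σ : ℕ → RTerm F) (p : List ℕ),
      RTerm.SubAt s p (l.subst σ) ∧ RTerm.ReplAt s p (r.subst σ) t

/-- Equivalence modulo the set of equations `E`. -/
def EqE {F : Type} (E : List (Pat F × Pat F)) : RTerm F → RTerm F → Prop :=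
  Relation.ReflTransGen (Rew E)

/-! ### Global constraints -/

/-- Transition rule of a tree automaton with constraints between brothers:
`sym(args) → res` with brother equalities `bcEq` and disequalities `bcNeq`
(1-based indices of children). -/
structure Rule (F Q : Type) where
  sym : F
  args : List Q
  bcEq : List (ℕ × ℕ)
  bcNeq : List (ℕ × ℕ)
  res : Q

/-- Atomic global constraints: `q ≈ q'`, `q ≉ q'`, and linear inequalities
`Σ c·|q| ≥ a` (type `|.|`) and `Σ c·‖q‖ ≥ a` (type `‖.‖`). -/
inductive GAtom (Q : Type) : Type
  | eq : Q → Q → GAtom Q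
  | neq : Q → Q → GAtom Q
  | cnt : List (ℤ × Q) → ℤ → GAtom Q
  | cls : List (ℤ × Q) → ℤ → GAtom Q

/-- Boolean combinations of atomic global constraints. -/
inductive GC (Q : Type) : Type
  | tt : GC Q
  | ff : GC Q
  | atom : GAtom Q → GC Q
  | and : GC Q → GC Q → GC Q
  | or : GC Q → GC Q → GC Q
  | not : GC Q → GC Q

/-- The set of `=E`-equivalence classes of members of a set of terms. -/
def classesOf {F : Type} (E : List (Pat F × Pat F)) (S : Set (RTerm F)) :
    Set (Set (RTerm F)) :=
  {C | ∃ t ∈ S, C = {u | EqE E t u}}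

section Sat

variable {β F Q : Type}

/-- Positions of a (run) tree where the node has state `q`
(`st` extracts the state of a node label). -/
def stPos (st : β → Q) (r : RTerm β) (q : Q) : Set (List ℕ) :=
  {p | ∃ s, RTerm.SubAt r p s ∧ st s.rootLabel = q}

/-- `⟦|q|⟧` : the number of positions with state `q`. -/
noncomputable def stCount (st : β → Q) (r : RTerm β) (q : Q) : ℕ :=
  (stPos st r q).ncard

/-- Terms occurring below positions with state `q`. -/
def stTerms (st : β → Q) (sy : β → F) (r : RTerm β) (q : Q) : Set (RTerm F) :=
  {t | ∃ p s, RTerm.SubAt r p s ∧ st s.rootLabel = q ∧ s.map sy = t}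

/-- `⟦‖q‖⟧` : the number of `=E`-classes of terms at positions with state `q`. -/
noncomputable def clsCount (E : List (Pat F × Pat F)) (st : β → Q) (sy : β → F)
    (r : RTerm β) (q : Q) : ℕ :=
  (classesOf E (stTerms st sy r q)).ncard

/-- Satisfaction of a global atomic constraint by a run tree. -/
def satAtom (E : List (Pat F × Pat F)) (st : β → Q) (sy : β → F) (r : RTerm β) :
    GAtom Q → Prop
  | .eq q q' => ∀ p p' s s', p ≠ p' → RTerm.SubAt r p s → RTerm.SubAt r p' s' →
      st s.rootLabel = q → st s'.rootLabel = q' → EqE E (s.map sy) (s'.map sy)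
  | .neq q q' => ∀ p p' s s', p ≠ p' → RTerm.SubAt r p s → RTerm.SubAt r p' s' →
      st s.rootLabel = q → st s'.rootLabel = q' → ¬ EqE E (s.map sy) (s'.map sy)
  | .cnt l a => a ≤ (l.map (fun cq => cq.1 * (stCount st r cq.2 : ℤ))).sum
  | .cls l a => a ≤ (l.map (fun cq => cq.1 * (clsCount E st sy r cq.2 : ℤ))).sum

/-- Satisfaction of a global constraint by a run tree. -/
def satGC (E : List (Pat F × Pat F)) (st : β → Q) (sy : β → F) (r : RTerm β) :
    GC Q → Prop
  | .tt => True
  | .ff => False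
  | .atom a => satAtom E st sy r a
  | .and c d => satGC E st sy r c ∧ satGC E st sy r d
  | .or c d => satGC E st sy r c ∨ satGC E st sy r d
  | .not c => ¬ satGC E st sy r c

end Sat

/-! ### Tree automata with global and brother constraints modulo a flat theory -/

/-- A run is represented as a tree labeled by the rules applied at each position. -/
abbrev Run (F Q : Type) := RTerm (Rule F Q)

def Run.state {F Q : Type} (r : Run F Q) : Q := (RTerm.rootLabel r).res
def Run.term {F Q : Type} (r : Run F Q) : RTerm F := r.map Rule.sym

/-- `r` is a structurally correct run using rules of `Δ`, whose local brother
constraints are satisfied modulo `E`. -/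
inductive IsRun {F Q : Type} (Δ : List (Rule F Q)) (E : List (Pat F × Pat F)) :
    Run F Q → Prop
  | node {ρ : Rule F Q} {rs : List (Run F Q)} :
      ρ ∈ Δ →
      ρ.args = rs.map Run.state →
      (∀ r ∈ rs, IsRun Δ E r) →
      (∀ i j ri rj, (i, j) ∈ ρ.bcEq → rs[i - 1]? = some ri →
        rs[j - 1]? = some rj → EqE E ri.term rj.term) →
      (∀ i j ri rj, (i, j) ∈ ρ.bcNeq → rs[i - 1]? = some ri →
        rs[j - 1]? = some rj → ¬ EqE E ri.term rj.term) →
      IsRun Δ E (RTerm.node ρ rs)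

/-- Tree automaton with brother constraints and global constraints modulo a flat theory. -/
structure TABG (F Q : Type) where
  arity : F → ℕ
  stQ : Finset Q
  rules : List (Rule F Q)
  final : List Q
  eqs : List (Pat F × Pat F)
  gc : GC Q

def TABG.IsAccRun {F Q : Type} (A : TABG F Q) (r : Run F Q) : Prop :=
  IsRun A.rules A.eqs r ∧ satGC A.eqs Rule.res Rule.sym r A.gc ∧ r.state ∈ A.final

def TABG.Lang {F Q : Type} (A : TABG F Q) : Set (RTerm F) :=
  {t | ∃ r : Run F Q, A.IsAccRun r ∧ r.term = t}

def Rule.WFr {F Q : Type} (ar : F → ℕ) (S : Finset Q) (ρ : Rule F Q) : Prop :=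
  ρ.args.length = ar ρ.sym ∧ ρ.res ∈ S ∧ (∀ q ∈ ρ.args, q ∈ S) ∧
  (∀ ij ∈ ρ.bcEq, 1 ≤ ij.1 ∧ ij.1 ≤ ρ.args.length ∧ 1 ≤ ij.2 ∧ ij.2 ≤ ρ.args.length) ∧
  (∀ ij ∈ ρ.bcNeq, 1 ≤ ij.1 ∧ ij.1 ≤ ρ.args.length ∧ 1 ≤ ij.2 ∧ ij.2 ≤ ρ.args.length)

/-- Well-formedness of a TABG: the equational theory is flat, the rules respect
the arities and the state set, and final states belong to the state set. -/
def TABG.WF {F Q : Type} (A : TABG F Q) : Prop :=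
  (∀ e ∈ A.eqs, IsFlatEq A.arity e) ∧
  (∀ ρ ∈ A.rules, ρ.WFr A.arity A.stQ) ∧
  (∀ q ∈ A.final, q ∈ A.stQ)

/-! ### Classes of constraints -/

def GAtom.IsEqNeq {Q : Type} : GAtom Q → Prop
  | .eq _ _ => True
  | .neq _ _ => True
  | .cnt _ _ => False
  | .cls _ _ => False

/-- All coefficients and the constant have the same sign. -/
def sameSign (l : List ℤ) (a : ℤ) : Prop :=
  ((∀ c ∈ l, 0 ≤ c) ∧ 0 ≤ a) ∨ ((∀ c ∈ l, c ≤ 0) ∧ a ≤ 0)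

/-- eq/neq atoms and *natural* linear inequalities. -/
def GAtom.IsNat {Q : Type} : GAtom Q → Prop
  | .eq _ _ => True
  | .neq _ _ => True
  | .cnt l a => sameSign (l.map Prod.fst) a
  | .cls l a => sameSign (l.map Prod.fst) a

/-- eq/neq atoms and natural linear inequalities over the `|q|` only. -/
def GAtom.IsNatCnt {Q : Type} : GAtom Q → Prop
  | .eq _ _ => True
  | .neq _ _ => True
  | .cnt l a => sameSign (l.map Prod.fst) a
  | .cls _ _ => False

def GC.AtomsAre {Q : Type} (P : GAtom Q → Prop) : GC Q → Prop
  | .tt => True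
  | .ff => True
  | .atom a => P a
  | .and c d => GC.AtomsAre P c ∧ GC.AtomsAre P d
  | .or c d => GC.AtomsAre P c ∧ GC.AtomsAre P d
  | .not c => GC.AtomsAre P c

/-- Positive conjunctive constraint: a conjunction of atoms. -/
def GC.IsConjAtoms {Q : Type} : GC Q → Prop
  | .tt => True
  | .ff => False
  | .atom _ => True
  | .and c d => GC.IsConjAtoms c ∧ GC.IsConjAtoms d
  | .or _ _ => False
  | .not _ => False

/-- A literal: an atom (with natural arithmetic atoms) or the negation of an
eq/neq atom. -/
def GC.IsLit {Q : Type} : GC Q → Prop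
  | .atom a => GAtom.IsNat a
  | .not (.atom (.eq _ _)) => True
  | .not (.atom (.neq _ _)) => True
  | _ => False

def GC.IsConjLit {Q : Type} : GC Q → Prop
  | .and c d => GC.IsConjLit c ∧ GC.IsConjLit d
  | c => GC.IsLit c

def GC.IsDNF {Q : Type} : GC Q → Prop
  | .or c d => GC.IsDNF c ∧ GC.IsDNF d
  | c => GC.IsConjLit c

/-- Normalized constraint: `true`, `false`, or a disjunction of conjunctions of
literals in which all arithmetic literals are positive. -/
def GC.Normalized {Q : Type} (c : GC Q) : Prop :=
  c = GC.tt ∨ c = GC.ff ∨ GC.IsDNF c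

/-- No reflexive disequality constraints (the TAGED restriction). -/
def GC.NoReflNeq {Q : Type} : GC Q → Prop :=
  GC.AtomsAre (fun a => match a with
    | .neq q q' => q ≠ q'
    | _ => True)

def conjList {Q : Type} : List (GC Q) → GC Q
  | [] => GC.tt
  | [c] => c
  | c :: cs => GC.and c (conjList cs)

def disjList {Q : Type} : List (GC Q) → GC Q
  | [] => GC.ff
  | [c] => c
  | c :: cs => GC.or c (disjList cs)

/-- No local constraints between brothers. -/
def TABG.NoBrother {F Q : Type} (A : TABG F Q) : Prop :=
  ∀ ρ ∈ A.rules, ρ.bcEq = [] ∧ ρ.bcNeq = []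

/-- A TAG: empty equational theory and no brother constraints. -/
def TABG.IsTAG {F Q : Type} (A : TABG F Q) : Prop := A.eqs = [] ∧ A.NoBrother

/-- A plain tree automaton: a TAG with trivial global constraint. -/
def TABG.IsTA {F Q : Type} (A : TABG F Q) : Prop := A.IsTAG ∧ A.gc = GC.tt

/-! ### Synonym states -/

section Syn

variable {F Q : Type} [DecidableEq Q]

/-- Possible replacements of a state occurrence: `q̄` may stay or become `q̂`. -/
def replS (qb qh q : Q) : List Q := if q = qb then [qb, qh] else [q]

/-- Replacement of every occurrence of `|q̄|` (resp. `‖q̄‖`) by `|q̄| + |q̂|`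
(resp. `‖q̄‖ + ‖q̂‖`) in a linear expression. -/
def linRepl (qb qh : Q) (l : List (ℤ × Q)) : List (ℤ × Q) :=
  l.flatMap (fun cq => (replS qb qh cq.2).map (fun q' => (cq.1, q')))

/-- Literal transformation on positive atoms. -/
def synAtom (qb qh : Q) : GAtom Q → GC Q
  | .eq q1 q2 => conjList ((replS qb qh q1).flatMap (fun a =>
      (replS qb qh q2).map (fun b => GC.atom (GAtom.eq a b))))
  | .neq q1 q2 => conjList ((replS qb qh q1).flatMap (fun a =>
      (replS qb qh q2).map (fun b => GC.atom (GAtom.neq a b))))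
  | .cnt l a => GC.atom (GAtom.cnt (linRepl qb qh l) a)
  | .cls l a => GC.atom (GAtom.cls (linRepl qb qh l) a)

/-- The literal transformation `Ĉ` of (a normalized) constraint, for `q̄ ↝ q̂`. -/
def GC.synTrans (qb qh : Q) : GC Q → GC Q
  | .tt => .tt
  | .ff => .ff
  | .atom a => synAtom qb qh a
  | .not (.atom (.eq q1 q2)) => disjList ((replS qb qh q1).flatMap (fun a =>
      (replS qb qh q2).map (fun b => GC.not (GC.atom (GAtom.eq a b)))))
  | .not (.atom (.neq q1 q2)) => disjList ((replS qb qh q1).flatMap (fun a =>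
      (replS qb qh q2).map (fun b => GC.not (GC.atom (GAtom.neq a b)))))
  | .not c => GC.not (GC.synTrans qb qh c)
  | .and c d => GC.and (GC.synTrans qb qh c) (GC.synTrans qb qh d)
  | .or c d => GC.or (GC.synTrans qb qh c) (GC.synTrans qb qh d)

/-- All rules obtained from `ρ` by all possible replacements of occurrences of
`q̄` by `q̂`. -/
def Rule.synVars (qb qh : Q) (ρ : Rule F Q) : List (Rule F Q) :=
  (ρ.args.mapM (replS qb qh)).flatMap (fun args' =>
    (replS qb qh ρ.res).map (fun res' =>
      { sym := ρ.sym, args := args', bcEq := ρ.bcEq, bcNeq := ρ.bcNeq, res := res' }))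

/-- `F_{q̄↝q̂}` on the list of final states. -/
def finSyn (qb qh : Q) (l : List Q) : List Q := if qb ∈ l then qh :: l else l

/-- The constraint `‖q‖ = k`. -/
def clsEqC (q : Q) (k : ℤ) : GC Q :=
  GC.and (GC.atom (GAtom.cls [(1, q)] k)) (GC.atom (GAtom.cls [(-1, q)] (-k)))

/-- The automaton `A_{q̄↝q̂}`. -/
def TABG.synonym (A : TABG F Q) (qb qh : Q) : TABG F Q :=
  { arity := A.arity
    stQ := insert qh A.stQ
    rules := A.rules.flatMap (Rule.synVars qb qh)
    final := finSyn qb qh A.final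
    eqs := A.eqs
    gc := GC.and
      (GC.or (GC.and (clsEqC qb 0) (clsEqC qh 0))
             (GC.and (clsEqC qh 1) (GC.atom (GAtom.neq qb qh))))
      (GC.synTrans qb qh A.gc) }

end Syn

/-! ### Removal of the counting constraints `|q|` : the automaton `A_¬ℕ` -/

def GC.cntAtoms {Q : Type} : GC Q → List (List (ℤ × Q) × ℤ)
  | .atom (.cnt l a) => [(l, a)]
  | .and c d => GC.cntAtoms c ++ GC.cntAtoms d
  | .or c d => GC.cntAtoms c ++ GC.cntAtoms d
  | .not c => GC.cntAtoms c
  | _ => []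

def GC.eqAtoms {Q : Type} : GC Q → List (Q × Q)
  | .atom (.eq q q') => [(q, q')]
  | .and c d => GC.eqAtoms c ++ GC.eqAtoms d
  | .or c d => GC.eqAtoms c ++ GC.eqAtoms d
  | .not c => GC.eqAtoms c
  | _ => []

def GC.neqAtoms {Q : Type} : GC Q → List (Q × Q)
  | .atom (.neq q q') => [(q, q')]
  | .and c d => GC.neqAtoms c ++ GC.neqAtoms d
  | .or c d => GC.neqAtoms c ++ GC.neqAtoms d
  | .not c => GC.neqAtoms c
  | _ => []

/-- `max_A` : one plus the maximal constant occurring in the counting literals. -/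
def GC.maxConst {Q : Type} (c : GC Q) : ℕ :=
  1 + ((c.cntAtoms.map (fun la => la.2.natAbs)).foldr max 0)

/-- Truncated sum of two mappings `Q → {0,…,m}`. -/
def msumF {Q : Type} {m : ℕ} (M1 M2 : Q → Fin (m + 1)) : Q → Fin (m + 1) :=
  fun q => ⟨min ((M1 q : ℕ) + (M2 q : ℕ)) m, Nat.lt_succ_of_le (Nat.min_le_right _ _)⟩

/-- The mapping `M_q`. -/
def unitMap {Q : Type} [DecidableEq Q] (m : ℕ) (q : Q) : Q → Fin (m + 1) :=
  fun q' => if q' = q then ⟨min 1 m, Nat.lt_succ_of_le (Nat.min_le_right _ _)⟩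
            else ⟨0, Nat.succ_pos m⟩

/-- Value of a linear expression under a mapping. -/
def lvalF {Q : Type} {m : ℕ} (M : Q → Fin (m + 1)) (l : List (ℤ × Q)) : ℤ :=
  (l.map (fun cq => cq.1 * ((M cq.2 : ℕ) : ℤ))).sum

/-- All variants of a rule, decorated with occurrence-counting mappings. -/
noncomputable def Rule.notNVars {F Q : Type} [Fintype Q] [DecidableEq Q] (m : ℕ) (ρ : Rule F Q) :
    List (Rule F (Q × (Q → Fin (m + 1)))) :=
  ((ρ.args.mapM (fun q =>
      ((Finset.univ : Finset (Q → Fin (m + 1))).toList).map (fun M => (q, M))))).map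
    (fun args' =>
      { sym := ρ.sym, args := args', bcEq := ρ.bcEq, bcNeq := ρ.bcNeq,
        res := (ρ.res, (args'.map Prod.snd).foldr msumF (unitMap m ρ.res)) })

/-- The automaton `A_¬ℕ`. -/
noncomputable def TABG.notN {F Q : Type} [Fintype Q] [DecidableEq Q] (A : TABG F Q) :
    TABG F (Q × (Q → Fin (A.gc.maxConst + 1))) :=
  { arity := A.arity
    stQ := A.stQ ×ˢ (Finset.univ : Finset (Q → Fin (A.gc.maxConst + 1)))
    rules := A.rules.flatMap (Rule.notNVars A.gc.maxConst)
    final := (A.final.flatMap (fun q =>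
        ((Finset.univ : Finset (Q → Fin (A.gc.maxConst + 1))).toList).map
          (fun M => (q, M)))).filter
        (fun qM => decide (∀ la ∈ A.gc.cntAtoms, la.2 ≤ lvalF qM.2 la.1))
    eqs := A.eqs
    gc := GC.and
      (conjList ((A.gc.eqAtoms).flatMap (fun qq =>
        ((Finset.univ : Finset (Q → Fin (A.gc.maxConst + 1))).toList).flatMap (fun M1 =>
          ((Finset.univ : Finset (Q → Fin (A.gc.maxConst + 1))).toList).map (fun M2 =>
            GC.atom (GAtom.eq (qq.1, M1) (qq.2, M2)))))))
      (conjList ((A.gc.neqAtoms).flatMap (fun qq =>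
        ((Finset.univ : Finset (Q → Fin (A.gc.maxConst + 1))).toList).flatMap (fun M1 =>
          ((Finset.univ : Finset (Q → Fin (A.gc.maxConst + 1))).toList).map (fun M2 =>
            GC.atom (GAtom.neq (qq.1, M1) (qq.2, M2))))))) }

/-! ### Global pumpings -/

section Pump

variable {F Q : Type}

/-- `H_i` : positions of subruns of positive height equal to `i`. -/
def Hset (r : Run F Q) (i : ℕ) : Set (List ℕ) :=
  {p | ∃ s, RTerm.SubAt r p s ∧ 0 < RTerm.height s ∧ RTerm.height s = i}

/-- `Ȟ_i` : positions `p.j` of subruns of positive height `< i` whose parent has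
height `> i`. -/
def Hcheck (r : Run F Q) (i : ℕ) : Set (List ℕ) :=
  {p' | ∃ (p : List ℕ) (j : ℕ) (s s' : Run F Q), p' = p ++ [j] ∧
    RTerm.SubAt r p s ∧ RTerm.SubAt r p' s' ∧
    0 < RTerm.height s' ∧ RTerm.height s' < i ∧ i < RTerm.height s}

/-- `H̊_i` : positions `p.j` of subruns of height `0` (with `0 < i`) whose parent
has height `> i`. -/
def Hring (r : Run F Q) (i : ℕ) : Set (List ℕ) :=
  {p' | ∃ (p : List ℕ) (j : ℕ) (s s' : Run F Q), p' = p ++ [j] ∧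
    RTerm.SubAt r p s ∧ RTerm.SubAt r p' s' ∧
    RTerm.height s' = 0 ∧ 0 < i ∧ i < RTerm.height s}

def Dom (r : Run F Q) (i : ℕ) : Set (List ℕ) := Hset r i ∪ Hcheck r i ∪ Hring r i

/-- A pump-injection `I : (H_i ∪ Ȟ_i ∪ H̊_i) → (H_j ∪ Ȟ_j ∪ H̊_j)`. -/
structure PumpInj (E : List (Pat F × Pat F)) (r : Run F Q) (i j : ℕ)
    (I : List ℕ → List ℕ) : Prop where
  inj : Set.InjOn I (Dom r i)
  mapsH : Set.MapsTo I (Hset r i) (Hset r j)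
  mapsHc : Set.MapsTo I (Hcheck r i) (Hcheck r j)
  mapsHr : Set.MapsTo I (Hring r i) (Hring r j)
  idRing : ∀ p ∈ Hring r i, I p = p
  stPres : ∀ p ∈ Dom r i, ∀ s s', RTerm.SubAt r p s → RTerm.SubAt r (I p) s' →
    Run.state s = Run.state s'
  eqPres : ∀ p1 p2, p1 ∈ Dom r i → p2 ∈ Dom r i →
    ∀ s1 s2 s1' s2', RTerm.SubAt r p1 s1 → RTerm.SubAt r p2 s2 →
      RTerm.SubAt r (I p1) s1' → RTerm.SubAt r (I p2) s2' →
      (EqE E (Run.term s1) (Run.term s2) ↔ EqE E (Run.term s1') (Run.term s2'))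

/-- Simultaneous replacement at all positions of `D` (which are assumed to be
pairwise parallel): at a position of `D` the subtree is replaced by a tree
allowed by `ρ`, elsewhere the tree is kept. -/
inductive MultiRepl {β : Type} (D : Set (List ℕ)) (ρ : List ℕ → RTerm β → Prop) :
    List ℕ → RTerm β → RTerm β → Prop
  | here {p : List ℕ} {t t' : RTerm β} : p ∈ D → ρ p t' → MultiRepl D ρ p t t'
  | node {p : List ℕ} {f : β} {ts ts' : List (RTerm β)} :
      p ∉ D → ts.length = ts'.length →
      (∀ k u u', ts[k]? = some u → ts'[k]? = some u' →
        MultiRepl D ρ (p ++ [k]) u u') →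
      MultiRepl D ρ p (RTerm.node f ts) (RTerm.node f ts')

/-- `r'` is the global pumping on `r` with indexes `i,j` and injection `I`. -/
def IsGlobalPumpingWith (E : List (Pat F × Pat F)) (r : Run F Q) (i j : ℕ)
    (I : List ℕ → List ℕ) (r' : Run F Q) : Prop :=
  PumpInj E r i j I ∧
  MultiRepl (Dom r i) (fun p s => RTerm.SubAt r (I p) s) [] r r'

/-- The `=E`-classes of the subterms at positions of `P`. -/
def classesAt (E : List (Pat F × Pat F)) (r : Run F Q) (P : Set (List ℕ)) :
    Set (Set (RTerm F)) :=
  classesOf E {t | ∃ p ∈ P, ∃ s, RTerm.SubAt r p s ∧ Run.term s = t}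

/-- The tuple `r_{t,P}` of a class `C`, as a function on states. -/
noncomputable def tupleAt (r : Run F Q) (P : Set (List ℕ)) (C : Set (RTerm F))
    (q : Q) : ℕ :=
  {p | p ∈ P ∧ ∃ s, RTerm.SubAt r p s ∧ Run.state s = q ∧ Run.term s ∈ C}.ncard

/-- The multiset ordering `r_P ≤ r_{P'}` : an injection on classes which is
dominating on the associated tuples. -/
def MsetLE (E : List (Pat F × Pat F)) (r : Run F Q) (P P' : Set (List ℕ)) : Prop :=
  ∃ φ : Set (RTerm F) → Set (RTerm F),
    Set.InjOn φ (classesAt E r P) ∧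
    Set.MapsTo φ (classesAt E r P) (classesAt E r P') ∧
    ∀ C ∈ classesAt E r P, ∀ q, tupleAt r P C q ≤ tupleAt r P' (φ C) q

end Pump

/-! ### Multisets of tuples of naturals (for the well quasi-ordering) -/

def TupLE {n : ℕ} (x y : Fin n → ℕ) : Prop := ∀ k, x k ≤ y k

/-- Multiset ordering: an injection mapping each element to a dominating one. -/
def MLE {n : ℕ} (S T : Multiset (Fin n → ℕ)) : Prop :=
  ∃ T' : Multiset (Fin n → ℕ), T' ≤ T ∧ Multiset.Rel TupLE S T'

def msumT {n : ℕ} (S : Multiset (Fin n → ℕ)) : ℕ :=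
  (S.map (fun x => ∑ k, x k)).sum

/-! ### Hedge automata with global constraints, and currying -/

/-- A finite word automaton over the alphabet `Q` (auxiliary states are naturals). -/
structure WordAut (Q : Type) where
  stS : Finset ℕ
  init : ℕ
  final : List ℕ
  trans : List (ℕ × Q × ℕ)

inductive WAccepts {Q : Type} (W : WordAut Q) : ℕ → List Q → Prop
  | nil {s : ℕ} : s ∈ W.final → WAccepts W s []
  | cons {s : ℕ} {q : Q} {s' : ℕ} {w : List Q} :
      (s, q, s') ∈ W.trans → WAccepts W s' w → WAccepts W s (q :: w)

def WordAut.Lang {Q : Type} (W : WordAut Q) (w : List Q) : Prop := WAccepts W W.init w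

/-- Transition rule `a(L) → q` of a hedge automaton. -/
structure HRule (F Q : Type) where
  sym : F
  wa : WordAut Q
  res : Q

/-- Hedge automaton with global constraints, over unranked ordered terms. -/
structure HAG (F Q : Type) where
  stQ : Finset Q
  rules : List (HRule F Q)
  final : List Q
  gc : GC Q

abbrev HRun (F Q : Type) := RTerm (HRule F Q)

def HRun.state {F Q : Type} (r : HRun F Q) : Q := (RTerm.rootLabel r).res
def HRun.term {F Q : Type} (r : HRun F Q) : RTerm F := r.map HRule.sym

inductive IsHRun {F Q : Type} (Δ : List (HRule F Q)) : HRun F Q → Prop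
  | node {ρ : HRule F Q} {rs : List (HRun F Q)} :
      ρ ∈ Δ → ρ.wa.Lang (rs.map HRun.state) →
      (∀ r ∈ rs, IsHRun Δ r) → IsHRun Δ (RTerm.node ρ rs)

def HAG.Lang {F Q : Type} (A : HAG F Q) : Set (RTerm F) :=
  {t | ∃ r : HRun F Q, IsHRun A.rules r ∧
        satGC ([] : List (Pat F × Pat F)) HRule.res HRule.sym r A.gc ∧
        HRun.state r ∈ A.final ∧ HRun.term r = t}

/-- The ranked signature `Σ_@` : symbols of `Σ` become constants, `none` is the
binary symbol `@`. -/
def arAt {F : Type} : Option F → ℕ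
  | none => 2
  | some _ => 0

/-- The `curry` encoding of unranked terms into ranked terms over `Σ_@`. -/
inductive Curried {F : Type} : RTerm F → RTerm (Option F) → Prop
  | base {a : F} : Curried (RTerm.node a []) (RTerm.node (some a) [])
  | step {a : F} {ts : List (RTerm F)} {t : RTerm F} {u v : RTerm (Option F)} :
      Curried (RTerm.node a ts) u → Curried t v →
      Curried (RTerm.node a (ts ++ [t])) (RTerm.node none [u, v])

/-! ### Concrete signatures and languages -/

/-- The signature `{a:0, s:1, f:2}` (resp. `{a:0, g:1, f:2}`): symbol `0` has
arity 0, symbol `1` arity 1, symbol `2` arity 2. -/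
def ar3 : Fin 3 → ℕ := ![0, 1, 2]

/-- `iter1 n` is `s^n(a)` (resp. `g^n(a)`). -/
def iter1 : ℕ → RTerm (Fin 3)
  | 0 => RTerm.node 0 []
  | n + 1 => RTerm.node 1 [iter1 n]

/-- `chain [n1,…,nk] = f(s^{n1}(a), f(s^{n2}(a), …, f(s^{nk}(a), a)…))`. -/
def chain : List ℕ → RTerm (Fin 3)
  | [] => RTerm.node 0 []
  | n :: ns => RTerm.node 2 [iter1 n, chain ns]

/-- The language of chains with pairwise distinct exponents. -/
def LKey : Set (RTerm (Fin 3)) := {t | ∃ ns : List ℕ, ns.Nodup ∧ t = chain ns}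

/-- `bracket [n1,…,nk] = f(g^{n1}(a), f(…, f(g^{n_{k−1}}(a), g^{n_k}(a))…))`. -/
def bracket : List ℕ → RTerm (Fin 3)
  | [] => RTerm.node 0 []
  | [n] => iter1 n
  | n :: ns => RTerm.node 2 [iter1 n, bracket ns]

/-- Every entry has exactly one partner with the same value. -/
def ExactlyOnePartner (ns : List ℕ) : Prop :=
  ∀ i, i < ns.length → ∃! j, j < ns.length ∧ j ≠ i ∧ ns[i]? = ns[j]?

def LDup : Set (RTerm (Fin 3)) :=
  {t | ∃ ns : List ℕ, ns ≠ [] ∧ ExactlyOnePartner ns ∧ t = bracket ns}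

/-! ### Concrete, codable presentations of automata -/

abbrev RuleData := ℕ × List ℕ × List (ℕ × ℕ) × List (ℕ × ℕ) × ℕ
abbrev PatAtomData := ℕ ⊕ ℕ
abbrev FlatSideData := PatAtomData ⊕ (ℕ × List PatAtomData)
abbrev LinData := List (ℤ × ℕ) × ℤ
abbrev GAtomData := (ℕ × ℕ) ⊕ ((ℕ × ℕ) ⊕ (LinData ⊕ LinData))
abbrev GCNodeData := GAtomData ⊕ (ℕ × ℕ × ℕ)
abbrev TABGData :=
  List (ℕ × ℕ) × List RuleData × List ℕ × List (FlatSideData × FlatSideData) ×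
    List GCNodeData

def decodePatAtom : PatAtomData → Pat ℕ
  | Sum.inl v => Pat.var v
  | Sum.inr c => Pat.node c []

def decodeSide : FlatSideData → Pat ℕ
  | Sum.inl a => decodePatAtom a
  | Sum.inr (f, l) => Pat.node f (l.map decodePatAtom)

def decodeGAtom : GAtomData → GAtom ℕ
  | Sum.inl (q, q') => GAtom.eq q q'
  | Sum.inr (Sum.inl (q, q')) => GAtom.neq q q'
  | Sum.inr (Sum.inr (Sum.inl (l, a))) => GAtom.cnt l a
  | Sum.inr (Sum.inr (Sum.inr (l, a))) => GAtom.cls l a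

def decodeGC (nodes : List GCNodeData) : ℕ → ℕ → GC ℕ
  | 0, _ => GC.tt
  | fuel + 1, i =>
    match nodes[i]? with
    | some (Sum.inl a) => GC.atom (decodeGAtom a)
    | some (Sum.inr (op, l, rr)) =>
      if op = 0 then GC.tt
      else if op = 1 then GC.ff
      else if op = 2 then GC.and (decodeGC nodes fuel l) (decodeGC nodes fuel rr)
      else if op = 3 then GC.or (decodeGC nodes fuel l) (decodeGC nodes fuel rr)
      else GC.not (decodeGC nodes fuel l)
    | none => GC.tt

def decodeRule : RuleData → Rule ℕ ℕ
  | (f, args, be, bn, q) => ⟨f, args, be, bn, q⟩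

def decodeArity (sig : List (ℕ × ℕ)) : ℕ → ℕ :=
  fun f => (((sig.find? (fun p => p.1 == f)).map Prod.snd).getD 0)

def dataStates (rules : List RuleData) (final : List ℕ) : Finset ℕ :=
  (rules.flatMap (fun r => r.2.2.2.2 :: r.2.1)).toFinset ∪ final.toFinset

/-- Decoding of a full TABG with arbitrary Boolean global constraint. -/
def decodeTABG (d : TABGData) : TABG ℕ ℕ :=
  { arity := decodeArity d.1
    stQ := dataStates d.2.1 d.2.2.1
    rules := d.2.1.map decodeRule
    final := d.2.2.1
    eqs := d.2.2.2.1.map (fun e => (decodeSide e.1, decodeSide e.2))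
    gc := decodeGC d.2.2.2.2 (d.2.2.2.2).length 0 }

/-- Data for a `TAG^∧[≈]` : signature, rules (no brother constraints), final
states, and a conjunction of equational atoms `q ≈ q'`. -/
abbrev TAGCEData := List (ℕ × ℕ) × List (ℕ × List ℕ × ℕ) × List ℕ × List (ℕ × ℕ)

def decodeTAGCE (d : TAGCEData) : TABG ℕ ℕ :=
  { arity := decodeArity d.1
    stQ := (d.2.1.flatMap (fun r => r.2.2 :: r.2.1)).toFinset ∪ d.2.2.1.toFinset
    rules := d.2.1.map (fun r => ⟨r.1, r.2.1, [], [], r.2.2⟩)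
    final := d.2.2.1
    eqs := []
    gc := conjList (d.2.2.2.map (fun qq => GC.atom (GAtom.eq qq.1 qq.2))) }

/-- Data for a `TAG^∧[≈, |.|_ℤ]` : as above plus a conjunction of integer linear
inequalities. -/
abbrev TAGCZData :=
  List (ℕ × ℕ) × List (ℕ × List ℕ × ℕ) × List ℕ × List (ℕ × ℕ) × List LinData

def decodeTAGCZ (d : TAGCZData) : TABG ℕ ℕ :=
  { arity := decodeArity d.1
    stQ := (d.2.1.flatMap (fun r => r.2.2 :: r.2.1)).toFinset ∪ d.2.2.1.toFinset
    rules := d.2.1.map (fun r => ⟨r.1, r.2.1, [], [], r.2.2⟩)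
    final := d.2.2.1
    eqs := []
    gc := conjList
      (d.2.2.2.1.map (fun qq => GC.atom (GAtom.eq qq.1 qq.2)) ++
       d.2.2.2.2.map (fun la => GC.atom (GAtom.cnt la.1 la.2))) }

/-- A tree language over the ranked signature `ar` is regular if it is the
language of a plain tree automaton. -/
def IsRegular (ar : ℕ → ℕ) (L : Set (RTerm ℕ)) : Prop :=
  ∃ (n : ℕ) (B : TABG ℕ (Fin n)), B.arity = ar ∧ B.WF ∧ B.IsTA ∧ B.Lang = L

/-! ### Automata classes as predicates -/

/-- A TAGED: a TAG whose constraint is a conjunction of atoms `q ≈ q'`, `q ≉ q'`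
without reflexive disequalities. -/
def TAGEDCond {F Q : Type} (A : TABG F Q) : Prop :=
  A.IsTAG ∧ A.gc.IsConjAtoms ∧ A.gc.AtomsAre GAtom.IsEqNeq ∧ A.gc.NoReflNeq

/-- A positive conjunctive TAG with eq/neq atoms (`TAG^∧[≈,≉]`). -/
def TAGCwCond {F Q : Type} (A : TABG F Q) : Prop :=
  A.IsTAG ∧ A.gc.IsConjAtoms ∧ A.gc.AtomsAre GAtom.IsEqNeq

end TreeAut

namespace TreeAut

section AuxLemmas

variable {F Q β γ : Type}

theorem rterm_ind {P : RTerm β → Prop}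
    (h : ∀ f ts, (∀ u ∈ ts, P u) → P (RTerm.node f ts)) : ∀ t, P t
  | .node f ts => h f ts (fun u hu => rterm_ind h u)
termination_by t => sizeOf t
decreasing_by
  simp only [RTerm.node.sizeOf_spec]
  have := List.sizeOf_lt_of_mem hu
  omega

theorem subAt_unique {t s s' : RTerm β} {p : List ℕ}
    (h : RTerm.SubAt t p s) (h' : RTerm.SubAt t p s') : s = s' := by
  induction h with
  | refl t => cases h'; rfl
  | step hg hsub ih =>
    cases h' with
    | step hg' hsub' =>
      rw [hg] at hg'
      cases hg'
      exact ih hsub'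

theorem set_get?_self {α : Type} : ∀ {l : List α} {i : ℕ} {a : α},
    l[i]? = some a → l.set i a = l
  | [], _, _, h => by simp at h
  | x :: xs, 0, a, h => by simp only [List.getElem?_cons_zero, Option.some.injEq] at h; subst h; rfl
  | x :: xs, n+1, a, h => by
      simp only [List.getElem?_cons_succ] at h
      simp only [List.set]
      rw [set_get?_self h]

theorem replAt_subAt {t t' s : RTerm β} {p : List ℕ}
    (h : RTerm.ReplAt t p s t') : RTerm.SubAt t' p s := by
  induction h with
  | here t s => exact .refl s
  | @step f ts k w w' s0 p0 hg hrep ih =>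
    refine RTerm.SubAt.step ?_ ih
    rw [List.getElem?_set_self]
    exact (List.getElem?_eq_some_iff.mp hg).1

theorem replAt_inv {t t' s : RTerm β} {p : List ℕ}
    (h2 : RTerm.ReplAt t p s t') :
    ∀ {u : RTerm β}, RTerm.SubAt t p u → RTerm.ReplAt t' p u t := by
  induction h2 with
  | here t s => intro u h; cases h; exact .here _ _
  | @step f ts k w w' s0 p0 hg hrep ih =>
    intro u h
    cases h with
    | @step _ _ _ w2 _ _ hg' hsub =>
      rw [hg] at hg'
      cases hg'
      have hx : (ts.set k w')[k]? = some w' := by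
        rw [List.getElem?_set_self]
        exact (List.getElem?_eq_some_iff.mp hg).1
      have hres : RTerm.ReplAt (RTerm.node f (ts.set k w')) (k :: p0) u
          (RTerm.node f ((ts.set k w').set k w)) := RTerm.ReplAt.step hx (ih hsub)
      rwa [List.set_set, set_get?_self hg] at hres

theorem rew_symm {E : List (Pat F × Pat F)} {s t : RTerm F} (h : Rew E s t) : Rew E t s := by
  obtain ⟨l, r, hmem, σ, p, hsub, hrep⟩ := h
  exact ⟨r, l, hmem.symm, σ, p, replAt_subAt hrep, replAt_inv hrep hsub⟩

theorem eqE_refl {E : List (Pat F × Pat F)} (t : RTerm F) : EqE E t t :=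
  Relation.ReflTransGen.refl

theorem eqE_symm {E : List (Pat F × Pat F)} {a b : RTerm F} (h : EqE E a b) : EqE E b a := by
  induction h with
  | refl => exact Relation.ReflTransGen.refl
  | tail _ h2 ih => exact Relation.ReflTransGen.head (rew_symm h2) ih

theorem cl_eq_of_eqE {E : List (Pat F × Pat F)} {t t' : RTerm F} (h : EqE E t t') :
    {u | EqE E t u} = {u | EqE E t' u} := by
  ext u
  exact ⟨fun h' => Relation.ReflTransGen.trans (eqE_symm h) h',
         fun h' => Relation.ReflTransGen.trans h h'⟩

theorem eqE_of_cl_eq {E : List (Pat F × Pat F)} {t t' : RTerm F}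
    (h : {u | EqE E t u} = {u | EqE E t' u}) : EqE E t t' := by
  have h1 : t' ∈ {u | EqE E t' u} := eqE_refl t'
  rw [← h] at h1
  exact h1

theorem cl_eq_of_mem {E : List (Pat F × Pat F)} {t u : RTerm F}
    (h : u ∈ {x | EqE E t x}) : {x | EqE E t x} = {x | EqE E u x} := cl_eq_of_eqE h

/-! #### Heights -/

theorem height_node_eq (f : β) (ts : List (RTerm β)) :
    RTerm.height (RTerm.node f ts) = (ts.map (fun u => u.height + 1)).foldr max 0 := by
  induction ts with
  | nil => simp [RTerm.height]
  | cons t ts ih => simp only [RTerm.height, List.map_cons, List.foldr_cons, ih]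

theorem foldr_max_le_iff {l : List ℕ} {n : ℕ} : l.foldr max 0 ≤ n ↔ ∀ x ∈ l, x ≤ n := by
  induction l with
  | nil => simp
  | cons a l ih => simp [max_le_iff, ih]

theorem height_node_le_iff {f : β} {ts : List (RTerm β)} {n : ℕ} :
    RTerm.height (RTerm.node f ts) ≤ n + 1 ↔ ∀ u ∈ ts, u.height ≤ n := by
  rw [height_node_eq, foldr_max_le_iff]
  constructor
  · intro h u hu
    have := h _ (List.mem_map_of_mem hu)
    omega
  · rintro h x hx
    obtain ⟨u, hu, rfl⟩ := List.mem_map.mp hx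
    have := h u hu
    omega

theorem one_le_height_node {f : β} {ts : List (RTerm β)} (h : ts ≠ []) :
    1 ≤ RTerm.height (RTerm.node f ts) := by
  cases ts with
  | nil => exact absurd rfl h
  | cons t ts =>
    simp only [RTerm.height]
    exact le_max_of_le_left (Nat.succ_le_succ (Nat.zero_le _))

theorem height_nil (c : β) : RTerm.height (RTerm.node c []) = 0 := by simp [RTerm.height]

theorem height_map (g : β → γ) : ∀ t : RTerm β, (RTerm.map g t).height = t.height := by
  refine rterm_ind fun f ts ih => ?_
  rw [RTerm.map, height_node_eq, height_node_eq]
  congr 1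
  calc (ts.attach.map fun u => RTerm.map g u.1).map (fun u => u.height + 1)
      = ts.attach.map (fun u => (RTerm.map g u.1).height + 1) := by
        rw [List.map_map]; rfl
    _ = ts.attach.map (fun u => u.1.height + 1) :=
        List.map_congr_left (fun u _ => by rw [ih u.1 u.2])
    _ = ts.map (fun u => u.height + 1) := List.attach_map_val (l := ts) (f := fun u => u.height + 1)

/-! #### Flat patterns and substitution heights -/

theorem pat_height_cons (f : F) (p : Pat F) (ps : List (Pat F)) :
    Pat.height (Pat.node f (p :: ps)) = max (p.height + 1) (Pat.height (Pat.node f ps)) := by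
  simp [Pat.height]

theorem pat_height_nil (f : F) : Pat.height (Pat.node f []) = 0 := by simp [Pat.height]

theorem pat_height_zero_nil {f : F} {ps : List (Pat F)}
    (h : Pat.height (Pat.node f ps) = 0) : ps = [] := by
  cases ps with
  | nil => rfl
  | cons p ps =>
    rw [pat_height_cons] at h
    have := le_max_left (p.height + 1) (Pat.height (Pat.node f ps))
    omega

theorem pat_child_height {f : F} {ps : List (Pat F)} (h : Pat.height (Pat.node f ps) ≤ 1) :
    ∀ p ∈ ps, p.height = 0 := by
  induction ps with
  | nil => simp
  | cons p ps ih =>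
    rw [pat_height_cons] at h
    intro q hq
    rcases List.mem_cons.mp hq with rfl | hq
    · have := (max_le_iff.mp h).1
      omega
    · exact ih (max_le_iff.mp h).2 q hq

theorem hasVar_zero {v : ℕ} {p : Pat F} (hp : p.height = 0) :
    Pat.HasVar v p ↔ p = Pat.var v := by
  constructor
  · intro h
    cases h with
    | var => rfl
    | node hmem hv =>
      rw [pat_height_zero_nil hp] at hmem
      cases hmem
  · rintro rfl
    exact .var

theorem pat_zero_cases {p : Pat F} (hp : p.height = 0) :
    (∃ v, p = Pat.var v) ∨ (∃ c, p = Pat.node c []) := by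
  cases p with
  | var v => exact Or.inl ⟨v, rfl⟩
  | node c ps => exact Or.inr ⟨c, by rw [pat_height_zero_nil hp]⟩

theorem subst_var (σ : ℕ → RTerm F) (v : ℕ) : Pat.subst σ (Pat.var v) = σ v := by
  rw [Pat.subst]

theorem subst_node (σ : ℕ → RTerm F) (f : F) (ps : List (Pat F)) :
    Pat.subst σ (Pat.node f ps) = RTerm.node f (ps.attach.map fun p => Pat.subst σ p.1) := by
  rw [Pat.subst]

theorem subst_const (σ : ℕ → RTerm F) (c : F) :
    Pat.subst σ (Pat.node c []) = RTerm.node c [] := by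
  rw [subst_node]; rfl

theorem hasVar_node {v : ℕ} {f : F} {ps : List (Pat F)} :
    Pat.HasVar v (Pat.node f ps) ↔ ∃ p ∈ ps, Pat.HasVar v p := by
  constructor
  · intro h
    cases h with
    | node hm hv => exact ⟨_, hm, hv⟩
  · rintro ⟨p, hm, hv⟩
    exact .node hm hv

theorem subst_node_height_le {σ : ℕ → RTerm F} {f : F} {ps : List (Pat F)}
    (hc : ∀ p ∈ ps, p.height = 0) (n : ℕ) :
    (Pat.subst σ (Pat.node f ps)).height ≤ n + 1 ↔
      ∀ v, Pat.HasVar v (Pat.node f ps) → (σ v).height ≤ n := by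
  rw [subst_node, height_node_le_iff]
  constructor
  · intro h v hv
    obtain ⟨p, hm, hvp⟩ := hasVar_node.mp hv
    have hp := (hasVar_zero (hc p hm)).mp hvp
    subst hp
    have hmem : Pat.subst σ (Pat.var v) ∈ ps.attach.map (fun p => Pat.subst σ p.1) :=
      List.mem_map.mpr ⟨⟨_, hm⟩, List.mem_attach _ _, rfl⟩
    have := h _ hmem
    rwa [subst_var] at this
  · intro h u hu
    obtain ⟨⟨p, hm⟩, -, rfl⟩ := List.mem_map.mp hu
    rcases pat_zero_cases (hc p hm) with ⟨v, rfl⟩ | ⟨c, rfl⟩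
    · rw [subst_var]
      exact h v (hasVar_node.mpr ⟨_, hm, .var⟩)
    · rw [subst_const, height_nil]
      exact Nat.zero_le n

theorem subst_node_height_pos {σ : ℕ → RTerm F} {f : F} {p0 : Pat F} {ps : List (Pat F)} :
    1 ≤ (Pat.subst σ (Pat.node f (p0 :: ps))).height := by
  rw [subst_node]
  apply one_le_height_node
  simp

theorem subst_height_eq {ar : F → ℕ} {l r : Pat F} (h : IsFlatEq ar (l, r)) (σ : ℕ → RTerm F) :
    (Pat.subst σ l).height = (Pat.subst σ r).height := by
  obtain ⟨-, -, hhe, hle, hvars⟩ := h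
  have hhe' : l.height = r.height := hhe
  have hle' : l.height ≤ 1 := hle
  have hvars' : ∀ v : ℕ, Pat.HasVar v l ↔ Pat.HasVar v r := hvars
  rcases Nat.lt_or_ge l.height 1 with h0 | h1
  · have hl0 : l.height = 0 := by omega
    have hr0 : r.height = 0 := by omega
    rcases pat_zero_cases hl0 with ⟨v, rfl⟩ | ⟨c, rfl⟩
    · have hvr : Pat.HasVar v r := (hvars' v).mp .var
      rw [(hasVar_zero hr0).mp hvr]
    · rcases pat_zero_cases hr0 with ⟨w, rfl⟩ | ⟨d, rfl⟩
      · exfalso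
        have := (hvars' w).mpr .var
        cases this with
        | node hm _ => cases hm
      · rw [subst_const, subst_const, height_nil, height_nil]
  · have hl1 : l.height = 1 := by omega
    have hr1 : r.height = 1 := by omega
    cases l with
    | var v => exact absurd hl1 (by simp [Pat.height])
    | node f ps =>
      cases r with
      | var w => exact absurd hr1 (by simp [Pat.height])
      | node g qs =>
        have hpc : ∀ p ∈ ps, Pat.height p = 0 := pat_child_height (f := f) (le_of_eq hl1)
        have hqc : ∀ p ∈ qs, Pat.height p = 0 := pat_child_height (f := g) (le_of_eq hr1)
        obtain ⟨p0, ps', rfl⟩ : ∃ p0 ps', ps = p0 :: ps' := by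
          cases ps with
          | nil => exact absurd hl1 (by rw [pat_height_nil]; omega)
          | cons a b => exact ⟨a, b, rfl⟩
        obtain ⟨q0, qs', rfl⟩ : ∃ q0 qs', qs = q0 :: qs' := by
          cases qs with
          | nil => exact absurd hr1 (by rw [pat_height_nil]; omega)
          | cons a b => exact ⟨a, b, rfl⟩
        have ha : 1 ≤ (Pat.subst σ (Pat.node f (p0 :: ps'))).height := subst_node_height_pos
        have hb : 1 ≤ (Pat.subst σ (Pat.node g (q0 :: qs'))).height := subst_node_height_pos
        obtain ⟨a', ha'⟩ : ∃ a', (Pat.subst σ (Pat.node f (p0 :: ps'))).height = a' + 1 :=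
          ⟨(Pat.subst σ (Pat.node f (p0 :: ps'))).height - 1, by omega⟩
        obtain ⟨b', hb'⟩ : ∃ b', (Pat.subst σ (Pat.node g (q0 :: qs'))).height = b' + 1 :=
          ⟨(Pat.subst σ (Pat.node g (q0 :: qs'))).height - 1, by omega⟩
        have hva : ∀ v, Pat.HasVar v (Pat.node f (p0 :: ps')) → (σ v).height ≤ a' :=
          (subst_node_height_le (σ := σ) (f := f) hpc a').mp (by omega)
        have hvb : ∀ v, Pat.HasVar v (Pat.node g (q0 :: qs')) → (σ v).height ≤ b' :=
          (subst_node_height_le (σ := σ) (f := g) hqc b').mp (by omega)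
        have h1 : (Pat.subst σ (Pat.node g (q0 :: qs'))).height ≤ a' + 1 :=
          (subst_node_height_le (σ := σ) (f := g) hqc a').mpr (fun v hv => hva v ((hvars' v).mpr hv))
        have h2 : (Pat.subst σ (Pat.node f (p0 :: ps'))).height ≤ b' + 1 :=
          (subst_node_height_le (σ := σ) (f := f) hpc b').mpr (fun v hv => hvb v ((hvars' v).mp hv))
        omega

theorem height_replAt {t t' s' : RTerm β} {p : List ℕ}
    (h2 : RTerm.ReplAt t p s' t') :
    ∀ {s : RTerm β}, RTerm.SubAt t p s → s'.height = s.height → t'.height = t.height := by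
  induction h2 with
  | here t s'' => intro s h1 hh; cases h1; exact hh
  | @step f ts k w w' s0 p0 hg hrep ih =>
    intro s h1 hh
    cases h1 with
    | @step _ _ _ w2 _ _ hg' hsub =>
      rw [hg] at hg'
      cases hg'
      have hu : w'.height = w.height := ih hsub hh
      rw [height_node_eq, height_node_eq, List.map_set]
      congr 1
      rw [hu]
      apply set_get?_self
      rw [List.getElem?_map, hg]
      rfl

theorem rew_height {ar : F → ℕ} {E : List (Pat F × Pat F)} (hE : ∀ e ∈ E, IsFlatEq ar e)
    {s t : RTerm F} (h : Rew E s t) : t.height = s.height := by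
  obtain ⟨l, r, hm, σ, p, hsub, hrep⟩ := h
  have hlr : (Pat.subst σ r).height = (Pat.subst σ l).height := by
    cases hm with
    | inl h' => exact (subst_height_eq (hE _ h') σ).symm
    | inr h' => exact subst_height_eq (hE _ h') σ
  exact height_replAt hrep hsub hlr

theorem eqE_height {ar : F → ℕ} {E : List (Pat F × Pat F)} (hE : ∀ e ∈ E, IsFlatEq ar e)
    {s t : RTerm F} (h : EqE E s t) : t.height = s.height := by
  induction h with
  | refl => rfl
  | tail _ h2 ih => rw [rew_height hE h2, ih]

/-! #### Positions, the subterm function -/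

theorem pos_finite : ∀ t : RTerm β, {p : List ℕ | RTerm.IsPos t p}.Finite := by
  refine rterm_ind fun f ts ih => ?_
  have hsub : {p : List ℕ | RTerm.IsPos (RTerm.node f ts) p} ⊆
      insert ([] : List ℕ)
        (⋃ k : Fin ts.length, (fun q => (k : ℕ) :: q) '' {p | RTerm.IsPos (ts.get k) p}) := by
    rintro p ⟨s, hs⟩
    cases hs with
    | refl => exact Set.mem_insert _ _
    | @step _ _ k u _ p' hg hsub' =>
      obtain ⟨hk, hget⟩ := List.getElem?_eq_some_iff.mp hg
      refine Set.mem_insert_iff.mpr (Or.inr ?_)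
      refine Set.mem_iUnion.mpr ⟨⟨k, hk⟩, ⟨p', ⟨s, by rw [List.get_eq_getElem, hget]; exact hsub'⟩, rfl⟩⟩
  exact Set.Finite.subset
    (Set.Finite.insert _ (Set.finite_iUnion fun k => ((ih _ (ts.get_mem _)).image _))) hsub

open Classical in
noncomputable def theSub (t : RTerm β) (p : List ℕ) : RTerm β :=
  if h : ∃ s, RTerm.SubAt t p s then h.choose else t

theorem subAt_theSub {t : RTerm β} {p : List ℕ} (h : RTerm.IsPos t p) :
    RTerm.SubAt t p (theSub t p) := by
  have h' : ∃ s, RTerm.SubAt t p s := h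
  rw [theSub, dif_pos h']
  exact h'.choose_spec

theorem theSub_eq {t s : RTerm β} {p : List ℕ} (h : RTerm.SubAt t p s) : theSub t p = s :=
  subAt_unique (subAt_theSub ⟨s, h⟩) h

noncomputable def stOf (r : Run F Q) (p : List ℕ) : Q := Run.state (theSub r p)
noncomputable def tmOf (r : Run F Q) (p : List ℕ) : RTerm F := Run.term (theSub r p)

theorem height_tmOf (r : Run F Q) (p : List ℕ) :
    (tmOf r p).height = (theSub r p).height := height_map _ _

/-! #### The sets H, Ȟ, H̊ -/

theorem mem_Hset_iff {r : Run F Q} {i : ℕ} {p : List ℕ} :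
    p ∈ Hset r i ↔ RTerm.IsPos r p ∧ 0 < (theSub r p).height ∧ (theSub r p).height = i := by
  constructor
  · rintro ⟨s, hs, h1, h2⟩
    rw [theSub_eq hs]
    exact ⟨⟨s, hs⟩, h1, h2⟩
  · rintro ⟨hp, h1, h2⟩
    exact ⟨theSub r p, subAt_theSub hp, h1, h2⟩

theorem mem_Hcheck_height {r : Run F Q} {i : ℕ} {p : List ℕ} (h : p ∈ Hcheck r i) :
    RTerm.IsPos r p ∧ 0 < (theSub r p).height ∧ (theSub r p).height < i := by
  obtain ⟨p0, j0, s, s', rfl, hs, hs', h1, h2, h3⟩ := h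
  rw [theSub_eq hs']
  exact ⟨⟨s', hs'⟩, h1, h2⟩

theorem mem_Hring_height {r : Run F Q} {i : ℕ} {p : List ℕ} (h : p ∈ Hring r i) :
    RTerm.IsPos r p ∧ (theSub r p).height = 0 ∧ 0 < i := by
  obtain ⟨p0, j0, s, s', rfl, hs, hs', h1, h2, h3⟩ := h
  rw [theSub_eq hs']
  exact ⟨⟨s', hs'⟩, h1, h2⟩

theorem Hring_mono {r : Run F Q} {i j : ℕ} (hj : 0 < j) (hij : j ≤ i) :
    Hring r i ⊆ Hring r j := by
  rintro p ⟨p0, k, s, s', rfl, hs, hs', h1, h2, h3⟩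
  exact ⟨p0, k, s, s', rfl, hs, hs', h1, hj, by omega⟩

/-! #### Classes at positions and tuples -/

theorem mem_classesAt_iff {E : List (Pat F × Pat F)} {r : Run F Q} {P : Set (List ℕ)}
    (hP : ∀ p ∈ P, RTerm.IsPos r p) {C : Set (RTerm F)} :
    C ∈ classesAt E r P ↔ ∃ p ∈ P, C = {u | EqE E (tmOf r p) u} := by
  constructor
  · rintro ⟨t, ⟨p, hp, s, hs, rfl⟩, rfl⟩
    refine ⟨p, hp, ?_⟩
    rw [tmOf, theSub_eq hs]
  · rintro ⟨p, hp, rfl⟩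
    exact ⟨tmOf r p, ⟨p, hp, theSub r p, subAt_theSub (hP p hp), rfl⟩, rfl⟩

noncomputable def pieceS (r : Run F Q) (P : Set (List ℕ)) (C : Set (RTerm F)) (q : Q) :
    Set (List ℕ) :=
  {p | p ∈ P ∧ stOf r p = q ∧ tmOf r p ∈ C}

theorem tupleAt_eq_ncard {r : Run F Q} {P : Set (List ℕ)} (hP : ∀ p ∈ P, RTerm.IsPos r p)
    (C : Set (RTerm F)) (q : Q) :
    tupleAt r P C q = (pieceS r P C q).ncard := by
  unfold tupleAt pieceS
  congr 1
  ext p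
  simp only [Set.mem_setOf_eq]
  constructor
  · rintro ⟨hp, s, hs, h1, h2⟩
    refine ⟨hp, ?_, ?_⟩
    · rw [stOf, theSub_eq hs]; exact h1
    · rw [tmOf, theSub_eq hs]; exact h2
  · rintro ⟨hp, h1, h2⟩
    exact ⟨hp, theSub r p, subAt_theSub (hP p hp), h1, h2⟩

theorem exists_injOn_of_ncard_le {α : Type} {A B : Set α} (hA : A.Finite) (hB : B.Finite)
    (h : A.ncard ≤ B.ncard) : ∃ f : α → α, Set.InjOn f A ∧ Set.MapsTo f A B := by
  classical
  haveI := hA.fintype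
  haveI := hB.fintype
  have hcard : Fintype.card A ≤ Fintype.card B := by
    rwa [← Nat.card_eq_fintype_card, ← Nat.card_eq_fintype_card,
      Nat.card_coe_set_eq, Nat.card_coe_set_eq]
  obtain ⟨e⟩ := Function.Embedding.nonempty_of_card_le hcard
  refine ⟨fun x => if hx : x ∈ A then (e ⟨x, hx⟩ : α) else x, ?_, ?_⟩
  · intro x hx y hy hxy
    have hxy' : (if hx : x ∈ A then ((e ⟨x, hx⟩ : B) : α) else x)
        = (if hy : y ∈ A then ((e ⟨y, hy⟩ : B) : α) else y) := hxy
    rw [dif_pos hx, dif_pos hy] at hxy'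
    have := e.injective (Subtype.coe_injective hxy')
    exact congrArg Subtype.val this
  · intro x hx
    simp only [dif_pos hx]
    exact (e ⟨x, hx⟩).2

theorem msetLE_of_inj {E : List (Pat F × Pat F)} {r : Run F Q} {I : List ℕ → List ℕ}
    {P P' : Set (List ℕ)}
    (hpos : ∀ p ∈ P, RTerm.IsPos r p) (hpos' : ∀ p ∈ P', RTerm.IsPos r p)
    (hmaps : Set.MapsTo I P P') (hinj : Set.InjOn I P)
    (hst : ∀ p ∈ P, stOf r (I p) = stOf r p)
    (heq : ∀ p1 ∈ P, ∀ p2 ∈ P,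
      (EqE E (tmOf r p1) (tmOf r p2) ↔ EqE E (tmOf r (I p1)) (tmOf r (I p2)))) :
    MsetLE E r P P' := by
  classical
  have hpick : ∀ C : Set (RTerm F), ∃ p : List ℕ,
      C ∈ classesAt E r P → p ∈ P ∧ C = {u | EqE E (tmOf r p) u} := by
    intro C
    by_cases hC : C ∈ classesAt E r P
    · obtain ⟨p, hp, hCe⟩ := (mem_classesAt_iff hpos).mp hC
      exact ⟨p, fun _ => ⟨hp, hCe⟩⟩
    · exact ⟨[], fun h => absurd h hC⟩
  choose pick hpick using hpick
  refine ⟨fun C => {u | EqE E (tmOf r (I (pick C))) u}, ?_, ?_, ?_⟩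
  · intro C1 h1 C2 h2 hphi
    obtain ⟨hp1, hC1⟩ := hpick C1 h1
    obtain ⟨hp2, hC2⟩ := hpick C2 h2
    have h3 : EqE E (tmOf r (I (pick C1))) (tmOf r (I (pick C2))) := eqE_of_cl_eq hphi
    have h4 := (heq _ hp1 _ hp2).mpr h3
    rw [hC1, hC2]
    exact cl_eq_of_eqE h4
  · intro C hC
    obtain ⟨hp, hCe⟩ := hpick C hC
    exact (mem_classesAt_iff hpos').mpr ⟨I (pick C), hmaps hp, rfl⟩
  · intro C hC q
    obtain ⟨hp, hCe⟩ := hpick C hC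
    rw [tupleAt_eq_ncard hpos, tupleAt_eq_ncard hpos']
    have hSP : pieceS r P C q ⊆ P := fun p hp' => hp'.1
    have himg : I '' pieceS r P C q ⊆
        pieceS r P' {u | EqE E (tmOf r (I (pick C))) u} q := by
      rintro _ ⟨p, ⟨hpP, hq, hmem⟩, rfl⟩
      refine ⟨hmaps hpP, by rw [hst p hpP]; exact hq, ?_⟩
      have e1 : EqE E (tmOf r (pick C)) (tmOf r p) := by
        rw [hCe] at hmem
        exact hmem
      exact (heq _ hp _ hpP).mp e1
    have hT0fin : (pieceS r P' {u | EqE E (tmOf r (I (pick C))) u} q).Finite :=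
      (pos_finite r).subset (fun p hp' => hpos' p hp'.1)
    calc (pieceS r P C q).ncard = (I '' pieceS r P C q).ncard :=
          (Set.ncard_image_of_injOn (hinj.mono hSP)).symm
      _ ≤ _ := Set.ncard_le_ncard himg hT0fin

theorem inj_of_msetLE {E : List (Pat F × Pat F)} {r : Run F Q}
    {P P' : Set (List ℕ)}
    (hpos : ∀ p ∈ P, RTerm.IsPos r p) (hpos' : ∀ p ∈ P', RTerm.IsPos r p)
    (h : MsetLE E r P P') :
    ∃ I : List ℕ → List ℕ, Set.MapsTo I P P' ∧ Set.InjOn I P ∧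
      (∀ p ∈ P, stOf r (I p) = stOf r p) ∧
      (∀ p1 ∈ P, ∀ p2 ∈ P,
        (EqE E (tmOf r p1) (tmOf r p2) ↔ EqE E (tmOf r (I p1)) (tmOf r (I p2)))) := by
  classical
  obtain ⟨φ, hφinj, hφmaps, hφle⟩ := h
  have hF : ∀ (C : Set (RTerm F)) (q : Q), ∃ f : List ℕ → List ℕ,
      C ∈ classesAt E r P →
        (Set.InjOn f (pieceS r P C q) ∧
          Set.MapsTo f (pieceS r P C q) (pieceS r P' (φ C) q)) := by
    intro C q
    by_cases hC : C ∈ classesAt E r P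
    · have hle := hφle C hC q
      rw [tupleAt_eq_ncard hpos, tupleAt_eq_ncard hpos'] at hle
      obtain ⟨f, hf1, hf2⟩ := exists_injOn_of_ncard_le
        ((pos_finite r).subset (fun p hp => hpos p hp.1))
        ((pos_finite r).subset (fun p hp => hpos' p hp.1)) hle
      exact ⟨f, fun _ => ⟨hf1, hf2⟩⟩
    · exact ⟨id, fun hc => absurd hc hC⟩
  choose Ff hFf using hF
  have hclP : ∀ p ∈ P, {u | EqE E (tmOf r p) u} ∈ classesAt E r P :=
    fun p hp => (mem_classesAt_iff hpos).mpr ⟨p, hp, rfl⟩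
  have hmemS : ∀ p ∈ P, p ∈ pieceS r P {u | EqE E (tmOf r p) u} (stOf r p) :=
    fun p hp => ⟨hp, rfl, eqE_refl _⟩
  refine ⟨fun p => Ff {u | EqE E (tmOf r p) u} (stOf r p) p, ?_, ?_, ?_, ?_⟩
  · intro p hp
    exact ((hFf _ _ (hclP p hp)).2 (hmemS p hp)).1
  · intro p1 hp1 p2 hp2 hxy
    have hxy' : Ff {u | EqE E (tmOf r p1) u} (stOf r p1) p1
        = Ff {u | EqE E (tmOf r p2) u} (stOf r p2) p2 := hxy
    have hm1 := (hFf _ _ (hclP p1 hp1)).2 (hmemS p1 hp1)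
    have hm2 := (hFf _ _ (hclP p2 hp2)).2 (hmemS p2 hp2)
    rw [hxy'] at hm1
    have hq : stOf r p1 = stOf r p2 := hm1.2.1.symm.trans hm2.2.1
    have hCC : φ {u | EqE E (tmOf r p1) u} = φ {u | EqE E (tmOf r p2) u} := by
      obtain ⟨t1, ht1, he1⟩ := (mem_classesAt_iff hpos').mp (hφmaps (hclP p1 hp1))
      obtain ⟨t2, ht2, he2⟩ := (mem_classesAt_iff hpos').mp (hφmaps (hclP p2 hp2))
      have hx1 := hm1.2.2
      have hx2 := hm2.2.2
      rw [he1] at hx1 ⊢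
      rw [he2] at hx2 ⊢
      rw [cl_eq_of_mem hx1, cl_eq_of_mem hx2]
    have hC : ({u | EqE E (tmOf r p1) u} : Set (RTerm F)) = {u | EqE E (tmOf r p2) u} :=
      hφinj (hclP p1 hp1) (hclP p2 hp2) hCC
    have hp2mem : p2 ∈ pieceS r P {u | EqE E (tmOf r p1) u} (stOf r p1) := by
      rw [hC, hq]
      exact hmemS p2 hp2
    have hxy'' : Ff {u | EqE E (tmOf r p1) u} (stOf r p1) p1
        = Ff {u | EqE E (tmOf r p1) u} (stOf r p1) p2 := by
      rw [hxy', hC, hq]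
    exact (hFf _ _ (hclP p1 hp1)).1 (hmemS p1 hp1) hp2mem hxy''
  · intro p hp
    exact ((hFf _ _ (hclP p hp)).2 (hmemS p hp)).2.1
  · intro p1 hp1 p2 hp2
    have hm1 := (hFf _ _ (hclP p1 hp1)).2 (hmemS p1 hp1)
    have hm2 := (hFf _ _ (hclP p2 hp2)).2 (hmemS p2 hp2)
    obtain ⟨t1, ht1, he1⟩ := (mem_classesAt_iff hpos').mp (hφmaps (hclP p1 hp1))
    obtain ⟨t2, ht2, he2⟩ := (mem_classesAt_iff hpos').mp (hφmaps (hclP p2 hp2))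
    have hx1 := hm1.2.2
    have hx2 := hm2.2.2
    constructor
    · intro h12
      have hC : ({u | EqE E (tmOf r p1) u} : Set (RTerm F)) = {u | EqE E (tmOf r p2) u} :=
        cl_eq_of_eqE h12
      have hx2' : tmOf r (Ff {u | EqE E (tmOf r p2) u} (stOf r p2) p2)
          ∈ φ {u | EqE E (tmOf r p1) u} := by rw [hC]; exact hx2
      rw [he1] at hx1 hx2'
      exact Relation.ReflTransGen.trans (eqE_symm hx1) hx2'
    · intro h12
      have hφeq : φ {u | EqE E (tmOf r p1) u} = φ {u | EqE E (tmOf r p2) u} := by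
        rw [he1] at hx1 ⊢
        rw [he2] at hx2 ⊢
        rw [cl_eq_of_mem hx1, cl_eq_of_mem hx2]
        exact cl_eq_of_eqE h12
      have hC : ({u | EqE E (tmOf r p1) u} : Set (RTerm F)) = {u | EqE E (tmOf r p2) u} :=
        hφinj (hclP p1 hp1) (hclP p2 hp2) hφeq
      have : tmOf r p2 ∈ {u | EqE E (tmOf r p1) u} := by
        rw [hC]
        exact eqE_refl _
      exact this

end AuxLemmas

end TreeAut


namespace TreeAut

/-- There exists a pump-injection
`I : (H_i ∪ Ȟ_i ∪ H̊_i) → (H_j ∪ Ȟ_j ∪ H̊_j)` if and only if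
`⟨r_{H_i}, r_{Ȟ_i}⟩ ≤ ⟨r_{H_j}, r_{Ȟ_j}⟩` in the ordering on pairs of multisets
of state-indexed tuples. -/
theorem pump_injection_iff_multiset_le {F Q : Type} (A : TABG F Q)
    (hwf : A.WF) (hconj : A.gc.IsConjAtoms) (hatoms : A.gc.AtomsAre GAtom.IsEqNeq)
    (r : Run F Q) (hrun : IsRun A.rules A.eqs r)
    (hsat : satGC A.eqs Rule.res Rule.sym r A.gc)
    (i j : ℕ) (hj : 1 ≤ j) (hij : j < i) (hi : i ≤ RTerm.height r) :
    (∃ I : List ℕ → List ℕ, PumpInj A.eqs r i j I) ↔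
      (MsetLE A.eqs r (Hset r i) (Hset r j) ∧
       MsetLE A.eqs r (Hcheck r i) (Hcheck r j)) := by
  classical
  have hposHsi : ∀ p ∈ Hset r i, RTerm.IsPos r p := fun p hp => (mem_Hset_iff.mp hp).1
  have hposHsj : ∀ p ∈ Hset r j, RTerm.IsPos r p := fun p hp => (mem_Hset_iff.mp hp).1
  have hposHci : ∀ p ∈ Hcheck r i, RTerm.IsPos r p := fun p hp => (mem_Hcheck_height hp).1
  have hposHcj : ∀ p ∈ Hcheck r j, RTerm.IsPos r p := fun p hp => (mem_Hcheck_height hp).1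
  have hSD : Hset r i ⊆ Dom r i := fun p hp => Or.inl (Or.inl hp)
  have hCD : Hcheck r i ⊆ Dom r i := fun p hp => Or.inl (Or.inr hp)
  have hne : ∀ p1 p2 : List ℕ, (theSub r p1).height ≠ (theSub r p2).height →
      ¬ EqE A.eqs (tmOf r p1) (tmOf r p2) := by
    intro p1 p2 hd h
    have := eqE_height hwf.1 h
    rw [height_tmOf, height_tmOf] at this
    exact hd this.symm
  constructor
  · rintro ⟨I, hPI⟩
    constructor
    · refine msetLE_of_inj hposHsi hposHsj hPI.mapsH (hPI.inj.mono hSD) ?_ ?_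
      · intro p hp
        exact (hPI.stPres p (hSD hp) _ _ (subAt_theSub (hposHsi p hp))
          (subAt_theSub (hposHsj _ (hPI.mapsH hp)))).symm
      · intro p1 hp1 p2 hp2
        exact hPI.eqPres p1 p2 (hSD hp1) (hSD hp2) _ _ _ _
          (subAt_theSub (hposHsi p1 hp1)) (subAt_theSub (hposHsi p2 hp2))
          (subAt_theSub (hposHsj _ (hPI.mapsH hp1))) (subAt_theSub (hposHsj _ (hPI.mapsH hp2)))
    · refine msetLE_of_inj hposHci hposHcj hPI.mapsHc (hPI.inj.mono hCD) ?_ ?_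
      · intro p hp
        exact (hPI.stPres p (hCD hp) _ _ (subAt_theSub (hposHci p hp))
          (subAt_theSub (hposHcj _ (hPI.mapsHc hp)))).symm
      · intro p1 hp1 p2 hp2
        exact hPI.eqPres p1 p2 (hCD hp1) (hCD hp2) _ _ _ _
          (subAt_theSub (hposHci p1 hp1)) (subAt_theSub (hposHci p2 hp2))
          (subAt_theSub (hposHcj _ (hPI.mapsHc hp1))) (subAt_theSub (hposHcj _ (hPI.mapsHc hp2)))
  · rintro ⟨h1, h2⟩
    obtain ⟨I₁, hm1, hi1, hs1, he1⟩ := inj_of_msetLE hposHsi hposHsj h1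
    obtain ⟨I₂, hm2, hi2, hs2, he2⟩ := inj_of_msetLE hposHci hposHcj h2
    have hdSC : ∀ p ∈ Hset r i, p ∉ Hcheck r i := by
      intro p hp hp'
      obtain ⟨-, -, a2⟩ := mem_Hset_iff.mp hp
      obtain ⟨-, -, b2⟩ := mem_Hcheck_height hp'
      omega
    have hdSR : ∀ p ∈ Hset r i, p ∉ Hring r i := by
      intro p hp hp'
      obtain ⟨-, a1, -⟩ := mem_Hset_iff.mp hp
      obtain ⟨-, b1, -⟩ := mem_Hring_height hp'
      omega
    have hdCR : ∀ p ∈ Hcheck r i, p ∉ Hring r i := by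
      intro p hp hp'
      obtain ⟨-, a1, -⟩ := mem_Hcheck_height hp
      obtain ⟨-, b1, -⟩ := mem_Hring_height hp'
      omega
    set Ig : List ℕ → List ℕ :=
      fun p => if p ∈ Hset r i then I₁ p else if p ∈ Hcheck r i then I₂ p else p with hIg
    have hg1 : ∀ p ∈ Hset r i, Ig p = I₁ p := by
      intro p hp
      simp only [hIg]
      rw [if_pos hp]
    have hg2 : ∀ p ∈ Hcheck r i, Ig p = I₂ p := by
      intro p hp
      simp only [hIg]
      rw [if_neg (fun h => hdSC p h hp), if_pos hp]
    have hg3 : ∀ p ∈ Hring r i, Ig p = p := by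
      intro p hp
      simp only [hIg]
      rw [if_neg (fun h => hdSR p h hp), if_neg (fun h => hdCR p h hp)]
    refine ⟨Ig, ?_, ?_, ?_, ?_, hg3, ?_, ?_⟩
    · -- InjOn on Dom
      intro p1 hp1 p2 hp2 he
      rcases hp1 with (m1 | m1) | m1 <;> rcases hp2 with (m2 | m2) | m2
      · rw [hg1 p1 m1, hg1 p2 m2] at he
        exact hi1 m1 m2 he
      · exfalso
        rw [hg1 p1 m1, hg2 p2 m2] at he
        obtain ⟨-, -, a2⟩ := mem_Hset_iff.mp (hm1 m1)
        obtain ⟨-, -, b2⟩ := mem_Hcheck_height (hm2 m2)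
        rw [he] at a2
        omega
      · exfalso
        rw [hg1 p1 m1, hg3 p2 m2] at he
        obtain ⟨-, a1, -⟩ := mem_Hset_iff.mp (hm1 m1)
        obtain ⟨-, b1, -⟩ := mem_Hring_height m2
        rw [he] at a1
        omega
      · exfalso
        rw [hg2 p1 m1, hg1 p2 m2] at he
        obtain ⟨-, -, a2⟩ := mem_Hcheck_height (hm2 m1)
        obtain ⟨-, -, b2⟩ := mem_Hset_iff.mp (hm1 m2)
        rw [he] at a2
        omega
      · rw [hg2 p1 m1, hg2 p2 m2] at he
        exact hi2 m1 m2 he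
      · exfalso
        rw [hg2 p1 m1, hg3 p2 m2] at he
        obtain ⟨-, a1, -⟩ := mem_Hcheck_height (hm2 m1)
        obtain ⟨-, b1, -⟩ := mem_Hring_height m2
        rw [he] at a1
        omega
      · exfalso
        rw [hg3 p1 m1, hg1 p2 m2] at he
        obtain ⟨-, a1, -⟩ := mem_Hring_height m1
        obtain ⟨-, b1, -⟩ := mem_Hset_iff.mp (hm1 m2)
        rw [← he] at b1
        omega
      · exfalso
        rw [hg3 p1 m1, hg2 p2 m2] at he
        obtain ⟨-, a1, -⟩ := mem_Hring_height m1
        obtain ⟨-, b1, -⟩ := mem_Hcheck_height (hm2 m2)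
        rw [← he] at b1
        omega
      · rw [hg3 p1 m1, hg3 p2 m2] at he
        exact he
    · -- mapsH
      intro p hp
      rw [hg1 p hp]
      exact hm1 hp
    · -- mapsHc
      intro p hp
      rw [hg2 p hp]
      exact hm2 hp
    · -- mapsHr
      intro p hp
      rw [hg3 p hp]
      exact Hring_mono hj (le_of_lt hij) hp
    · -- stPres
      intro p hp s s' hsub hsub'
      have es : s = theSub r p := (theSub_eq hsub).symm
      have es' : s' = theSub r (Ig p) := (theSub_eq hsub').symm
      subst es
      subst es'
      rcases hp with (m | m) | m
      · rw [hg1 p m]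
        exact (hs1 p m).symm
      · rw [hg2 p m]
        exact (hs2 p m).symm
      · rw [hg3 p m]
    · -- eqPres
      intro p1 p2 hp1 hp2 s1 s2 s1' s2' hh1 hh2 hh1' hh2'
      have e1 : s1 = theSub r p1 := (theSub_eq hh1).symm
      have e2 : s2 = theSub r p2 := (theSub_eq hh2).symm
      have e1' : s1' = theSub r (Ig p1) := (theSub_eq hh1').symm
      have e2' : s2' = theSub r (Ig p2) := (theSub_eq hh2').symm
      subst e1; subst e2; subst e1'; subst e2'
      show EqE A.eqs (tmOf r p1) (tmOf r p2) ↔ EqE A.eqs (tmOf r (Ig p1)) (tmOf r (Ig p2))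
      rcases hp1 with (m1 | m1) | m1 <;> rcases hp2 with (m2 | m2) | m2
      · rw [hg1 p1 m1, hg1 p2 m2]
        exact he1 p1 m1 p2 m2
      · rw [hg1 p1 m1, hg2 p2 m2]
        obtain ⟨-, -, a2⟩ := mem_Hset_iff.mp m1
        obtain ⟨-, -, b2⟩ := mem_Hcheck_height m2
        obtain ⟨-, -, a2'⟩ := mem_Hset_iff.mp (hm1 m1)
        obtain ⟨-, -, b2'⟩ := mem_Hcheck_height (hm2 m2)
        exact iff_of_false (hne p1 p2 (by omega)) (hne _ _ (by omega))
      · rw [hg1 p1 m1, hg3 p2 m2]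
        obtain ⟨-, a1, -⟩ := mem_Hset_iff.mp m1
        obtain ⟨-, b1, -⟩ := mem_Hring_height m2
        obtain ⟨-, a1', -⟩ := mem_Hset_iff.mp (hm1 m1)
        exact iff_of_false (hne p1 p2 (by omega)) (hne _ _ (by omega))
      · rw [hg2 p1 m1, hg1 p2 m2]
        obtain ⟨-, -, a2⟩ := mem_Hcheck_height m1
        obtain ⟨-, -, b2⟩ := mem_Hset_iff.mp m2
        obtain ⟨-, -, a2'⟩ := mem_Hcheck_height (hm2 m1)
        obtain ⟨-, -, b2'⟩ := mem_Hset_iff.mp (hm1 m2)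
        exact iff_of_false (hne p1 p2 (by omega)) (hne _ _ (by omega))
      · rw [hg2 p1 m1, hg2 p2 m2]
        exact he2 p1 m1 p2 m2
      · rw [hg2 p1 m1, hg3 p2 m2]
        obtain ⟨-, a1, -⟩ := mem_Hcheck_height m1
        obtain ⟨-, b1, -⟩ := mem_Hring_height m2
        obtain ⟨-, a1', -⟩ := mem_Hcheck_height (hm2 m1)
        exact iff_of_false (hne p1 p2 (by omega)) (hne _ _ (by omega))
      · rw [hg3 p1 m1, hg1 p2 m2]
        obtain ⟨-, a1, -⟩ := mem_Hring_height m1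
        obtain ⟨-, b1, -⟩ := mem_Hset_iff.mp m2
        obtain ⟨-, b1', -⟩ := mem_Hset_iff.mp (hm1 m2)
        exact iff_of_false (hne p1 p2 (by omega)) (hne _ _ (by omega))
      · rw [hg3 p1 m1, hg2 p2 m2]
        obtain ⟨-, a1, -⟩ := mem_Hring_height m1
        obtain ⟨-, b1, -⟩ := mem_Hcheck_height m2
        obtain ⟨-, b1', -⟩ := mem_Hcheck_height (hm2 m2)
        exact iff_of_false (hne p1 p2 (by omega)) (hne _ _ (by omega))
      · rw [hg3 p1 m1, hg3 p2 m2]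


end TreeAut
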